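/- Let h(s) = a₁s + a₂ with a₁ ∈ ℂ*, a₂ ∈ ℂ, and b ∈ ℂ*. The H₄-module M_{(h,b)} = ℂ[s] (with p·x = x(s-1)h(s), q·x = x(s+1)b, r·x = -a₁b·x, s·x = s·x(s)) is irreducible. -/

import Mathlib

open Polynomial

/-- For h(s) = a₁s + a₂ with a₁ ≠ 0 and b ≠ 0, the H₄-module M_{(h,b)} = ℂ[s]
(p·x = x(s-1)h(s), q·x = x(s+1)b, r·x = -a₁b·x, s·x = s·x(s)) is irreducible:
every ℂ-subspace invariant under the four actions is 0 or everything. -/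
theorem stmt12 (a₁ a₂ b : ℂ) (ha₁ : a₁ ≠ 0) (hb : b ≠ 0)
    (W : Submodule ℂ (Polynomial ℂ))
    (hP : ∀ x ∈ W,
      Polynomial.aeval (Polynomial.X - Polynomial.C 1 : Polynomial ℂ) x *
        (Polynomial.C a₁ * Polynomial.X + Polynomial.C a₂) ∈ W)
    (hQ : ∀ x ∈ W,
      Polynomial.aeval (Polynomial.X + Polynomial.C 1 : Polynomial ℂ) x * Polynomial.C b ∈ W)
    (hR : ∀ x ∈ W, (-(a₁ * b)) • x ∈ W)
    (hS : ∀ x ∈ W, Polynomial.X * x ∈ W) :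
    W = ⊥ ∨ W = ⊤ := by
  -- W is closed under multiplication by any polynomial, hence is an ideal.
  have hXpow : ∀ (n : ℕ), ∀ x ∈ W, X ^ n * x ∈ W := by
    intro n
    induction n with
    | zero => intro x hx; simpa using hx
    | succ n ih =>
      intro x hx
      have := hS _ (ih x hx)
      rw [pow_succ, mul_comm (X ^ n) X, mul_assoc]
      exact this
  have hmul : ∀ (c : Polynomial ℂ), ∀ x ∈ W, c * x ∈ W := by
    intro c x hx
    induction c using Polynomial.induction_on' with
    | add p q hp hq => rw [add_mul]; exact W.add_mem hp hq
    | monomial n a =>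
      have : (monomial n a : Polynomial ℂ) * x = a • (X ^ n * x) := by
        rw [← C_mul_X_pow_eq_monomial, smul_eq_C_mul, mul_assoc]
      rw [this]
      exact W.smul_mem a (hXpow n x hx)
  set I : Ideal (Polynomial ℂ) :=
    { carrier := W
      add_mem' := fun ha hb => W.add_mem ha hb
      zero_mem' := W.zero_mem
      smul_mem' := fun c x hx => hmul c x hx } with hI
  have hIW : ∀ x, x ∈ I ↔ x ∈ W := fun x => Iff.rfl
  obtain ⟨g, hg⟩ := (IsPrincipalIdealRing.principal I).1
  have hg' : I = Ideal.span {g} := hg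
  by_cases hg0 : g = 0
  · left
    ext x
    simp only [Submodule.mem_bot]
    constructor
    · intro hx
      have : x ∈ I := hx
      rw [hg', hg0, Ideal.span_singleton_eq_bot.mpr rfl] at this
      simpa using this
    · rintro rfl; exact W.zero_mem
  · -- g is nonzero; show g is a nonzero constant
    have hgW : g ∈ W := by
      have : g ∈ I := by rw [hg']; exact Ideal.subset_span rfl
      exact this
    -- the shift of g lies in W, hence g divides it
    have hshift : g.comp (X + C 1) ∈ W := by
      have h1 := hQ g hgW
      have h2 := W.smul_mem b⁻¹ h1
      have : b⁻¹ • (aeval (X + C 1 : Polynomial ℂ) g * C b) = g.comp (X + C 1) := by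
        rw [comp_eq_aeval, smul_eq_C_mul, mul_comm, mul_assoc, ← C_mul,
          mul_inv_cancel₀ hb, C_1, mul_one]
      rwa [this] at h2
    have hdvd : g ∣ g.comp (X + C 1) := by
      have : g.comp (X + C 1) ∈ I := hshift
      rw [hg'] at this
      exact (Ideal.mem_span_singleton).mp this
    by_cases hdeg : g.natDegree = 0
    · -- g is a nonzero constant, so I = ⊤
      right
      have hc : g.coeff 0 ≠ 0 := by
        intro h
        apply hg0
        rw [eq_C_of_natDegree_eq_zero hdeg, h, C_0]
      have hu : IsUnit g := by
        rw [eq_C_of_natDegree_eq_zero hdeg]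
        exact isUnit_C.mpr (isUnit_iff_ne_zero.mpr hc)
      have hItop : I = ⊤ := by
        rw [hg', Ideal.span_singleton_eq_top]
        exact hu
      ext x
      simp only [Submodule.mem_top, iff_true]
      have : x ∈ I := by rw [hItop]; trivial
      exact this
    · -- g nonconstant: it has a root α, and then α + n is a root for all n
      exfalso
      obtain ⟨α, hα⟩ := Complex.exists_root (f := g) (by
        rwa [← natDegree_pos_iff_degree_pos, Nat.pos_iff_ne_zero])
      have key : ∀ n : ℕ, g.IsRoot (α + n) := by
        intro n
        induction n with
        | zero => simpa using hα
        | succ n ih =>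
          have h1 : (g.comp (X + C 1)).IsRoot (α + n) := ih.dvd hdvd
          have h2 : (g.comp (X + C 1)).eval (α + n) = g.eval (α + n + 1) := by
            simp [eval_comp]
          have : g.eval (α + n + 1) = 0 := by rw [← h2]; exact h1
          simpa [add_assoc] using this
      apply hg0
      apply g.eq_zero_of_infinite_isRoot
      apply Set.infinite_of_injective_forall_mem
        (f := fun n : ℕ => α + (n : ℂ))
      · intro m n hmn
        simp only at hmn
        exact_mod_cast add_left_cancel hmn
      · intro n; exact key n
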